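/- If a relation B on a countable set X is transitive (and reflexive), then its lifting to probability distributions over X is transitive: if π₁ B̂ π₂ and π₂ B̂ π₃ then π₁ B̂ π₃, with the composite weight function w(t,t'') = Σ_{t' with π₂(t')>0} w₁(t,t')·w₂(t',t'')/π₂(t'). -/

import Mathlib

private lemma tsum_pred_eq {X : Type*} {f : X → ENNReal} {p : X → Prop}
    (h : ∀ x, ¬ p x → f x = 0) : ∑' x : {x // p x}, f x = ∑' x, f x :=
  tsum_subtype_eq_of_support_subset (s := {x | p x}) fun x hx => by
    by_contra hp; exact hx (h x hp)

private lemma tsum_pred_le {X : Type*} (f : X → ENNReal) (p : X → Prop) :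
    ∑' x : {x // p x}, f x ≤ ∑' x, f x :=
  ENNReal.tsum_comp_le_tsum_of_injective Subtype.val_injective f

/-- `w` is a weight function witnessing that the lifting of `B` relates `π` to `π`. -/
def IsWeight {X : Type*} (B : X → X → Prop) (π π' : X → ENNReal)
    (w : X → X → ENNReal) : Prop :=
  (∀ t t', w t t' ≤ 1) ∧
  (∀ t, ∑' t', w t t' = π t) ∧
  (∀ t', ∑' t, w t t' = π' t') ∧
  (∀ t t', 0 < w t t' → B t t')

/-- The lifting of a relation `B` on `X` to probability distributions over `X`. -/
def Lift {X : Type*} (B : X → X → Prop) (π π' : X → ENNReal) : Prop :=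
  ∃ w, IsWeight B π π' w

/-- If  is transitive (and reflexive) then its lifting to probability
distributions is transitive, with the composite weight function as witness. -/
theorem stmt_7 {X : Type*} [Countable X] (B : X → X → Prop)
    (htrans : ∀ t t' t'', B t t' → B t' t'' → B t t'')
    (hrefl : ∀ t, B t t)
    (π₁ π₂ π₃ : X → ENNReal)
    (hπ₁ : ∑' t, π₁ t = 1) (hπ₂ : ∑' t, π₂ t = 1) (hπ₃ : ∑' t, π₃ t = 1)
    (w₁ w₂ : X → X → ENNReal)
    (hw₁ : IsWeight B π₁ π₂ w₁) (hw₂ : IsWeight B π₂ π₃ w₂) :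
    IsWeight B π₁ π₃
      (fun t t'' => ∑' t' : {t' : X // 0 < π₂ t'}, w₁ t t' * w₂ t' t'' / π₂ t')
    ∧ Lift B π₁ π₃ := by
  obtain ⟨h1le, h1row, h1col, h1B⟩ := hw₁
  obtain ⟨h2le, h2row, h2col, h2B⟩ := hw₂
  have hπ₂top : ∀ t, π₂ t ≠ ⊤ := fun t =>
    ne_top_of_le_ne_top ENNReal.one_ne_top (hπ₂ ▸ ENNReal.le_tsum t)
  have hπ₁le : ∀ t, π₁ t ≤ 1 := fun t => hπ₁ ▸ ENNReal.le_tsum t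
  have hw₁0 : ∀ t t', π₂ t' = 0 → w₁ t t' = 0 := by
    intro t t' h0
    have : w₁ t t' ≤ ∑' s, w₁ s t' := ENNReal.le_tsum t
    rw [h1col, h0] at this
    exact le_antisymm this zero_le
  have hw₂0 : ∀ t' t'', π₂ t' = 0 → w₂ t' t'' = 0 := by
    intro t' t'' h0
    have : w₂ t' t'' ≤ ∑' s, w₂ t' s := ENNReal.le_tsum t''
    rw [h2row, h0] at this
    exact le_antisymm this zero_le
  have key : IsWeight B π₁ π₃
      (fun t t'' => ∑' t' : {t' : X // 0 < π₂ t'}, w₁ t t' * w₂ t' t'' / π₂ t') := by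
    refine ⟨?_, ?_, ?_, ?_⟩
    · intro t t''
      calc (∑' t' : {t' : X // 0 < π₂ t'}, w₁ t t' * w₂ t' t'' / π₂ t')
          ≤ ∑' t' : {t' : X // 0 < π₂ t'}, w₁ t (t' : X) := by
            refine ENNReal.tsum_le_tsum fun t' => ?_
            rw [mul_div_assoc]
            calc w₁ t t' * (w₂ t' t'' / π₂ t') ≤ w₁ t t' * 1 := by
                  gcongr
                  refine ENNReal.div_le_of_le_mul ?_
                  rw [one_mul, ← h2row t']
                  exact ENNReal.le_tsum t''
              _ = w₁ t t' := mul_one _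
        _ ≤ ∑' t', w₁ t t' := tsum_pred_le _ _
        _ = π₁ t := h1row t
        _ ≤ 1 := hπ₁le t
    · intro t
      rw [ENNReal.tsum_comm]
      calc (∑' (t' : {t' : X // 0 < π₂ t'}) (t'' : X), w₁ t t' * w₂ t' t'' / π₂ t')
          = ∑' t' : {t' : X // 0 < π₂ t'}, w₁ t t' := by
            refine tsum_congr fun t' => ?_
            simp_rw [div_eq_mul_inv]
            rw [ENNReal.tsum_mul_right, ENNReal.tsum_mul_left, h2row, mul_assoc,
              ENNReal.mul_inv_cancel t'.2.ne' (hπ₂top t'), mul_one]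
        _ = ∑' t', w₁ t t' := tsum_pred_eq fun t' h =>
            hw₁0 t t' (by simpa [pos_iff_ne_zero] using h)
        _ = π₁ t := h1row t
    · intro t''
      rw [ENNReal.tsum_comm]
      calc (∑' (t' : {t' : X // 0 < π₂ t'}) (t : X), w₁ t t' * w₂ t' t'' / π₂ t')
          = ∑' t' : {t' : X // 0 < π₂ t'}, w₂ t' t'' := by
            refine tsum_congr fun t' => ?_
            simp_rw [div_eq_mul_inv]
            have hre : ∀ s, w₁ s (t' : X) * w₂ (t' : X) t'' * (π₂ (t' : X))⁻¹
                = w₂ (t' : X) t'' * (π₂ (t' : X))⁻¹ * w₁ s (t' : X) := fun s => by ring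
            rw [tsum_congr hre, ENNReal.tsum_mul_left, h1col, mul_assoc,
              ENNReal.inv_mul_cancel t'.2.ne' (hπ₂top t'), mul_one]
        _ = ∑' t', w₂ t' t'' := tsum_pred_eq fun t' h =>
            hw₂0 t' t'' (by simpa [pos_iff_ne_zero] using h)
        _ = π₃ t'' := h2col t''
    · intro t t'' hpos
      have : ∃ t' : {t' : X // 0 < π₂ t'}, w₁ t t' * w₂ t' t'' / π₂ t' ≠ 0 := by
        by_contra h
        push_neg at h
        exact hpos.ne' (ENNReal.tsum_eq_zero.mpr h)
      obtain ⟨t', ht'⟩ := this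
      have hne : w₁ t t' * w₂ t' t'' ≠ 0 := fun h => ht' (by simp [h])
      exact htrans t t' t''
        (h1B _ _ (pos_iff_ne_zero.mpr fun h => hne (by simp [h])))
        (h2B _ _ (pos_iff_ne_zero.mpr fun h => hne (by simp [h])))
  exact ⟨key, ⟨_, key⟩⟩
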